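/- Let L be a finite lattice such that for every join-irreducible x there exists an element κ(x) that is the largest element s with s ≥ x_* and s ≱ x. Then L satisfies the meet-semidistributive law SD∧: a∧b = a∧c implies a∧b = a∧(b∨c). -/

import Mathlib

open Classical in
/-- The unique lower cover of a join-irreducible element in a finite lattice,
here realized as the join of all strictly smaller elements. -/
noncomputable def lowerStar {L : Type*} [Lattice L] [Fintype L] [BoundedOrder L] (x : L) : L :=
  (Finset.univ.filter (fun y : L => y < x)).sup id

theorem stmt7 {L : Type*} [Lattice L] [Fintype L] [BoundedOrder L]
    (hkappa : ∀ x : L, SupIrred x →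
      ∃ k : L, IsGreatest {s : L | lowerStar x ≤ s ∧ ¬ x ≤ s} k) :
    ∀ a b c : L, a ⊓ b = a ⊓ c → a ⊓ b = a ⊓ (b ⊔ c) := by
  classical
  intro a b c habc
  by_contra h
  set d := a ⊓ b with hd
  set m := a ⊓ (b ⊔ c) with hm
  have hdm : d ≤ m := inf_le_inf_left a le_sup_left
  have hmd : ¬ m ≤ d := fun hle => h (le_antisymm hdm hle)
  -- the set of elements below m but not below d
  set S : Finset L := Finset.univ.filter (fun t => t ≤ m ∧ ¬ t ≤ d) with hS
  have hmS : m ∈ S := by simp [hS, hmd]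
  obtain ⟨t, htS, htmin⟩ := S.exists_minimal ⟨m, hmS⟩
  have htm : t ≤ m ∧ ¬ t ≤ d := by simpa [hS] using htS
  -- any element strictly below t is below d
  have hbelow : ∀ y : L, y < t → y ≤ d := by
    intro y hy
    by_contra hyd
    exact hy.ne (le_antisymm hy.le (htmin (by simp [hS, le_trans hy.le htm.1, hyd]) hy.le))
  -- t is sup-irreducible
  have hirr : SupIrred t := by
    constructor
    · intro hmin
      have : t = ⊥ := le_antisymm (hmin bot_le) bot_le
      exact htm.2 (this ▸ bot_le)
    · intro u v huv
      by_contra hne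
      push_neg at hne
      have hu : u < t := lt_of_le_of_ne (huv ▸ le_sup_left) hne.1
      have hv : v < t := lt_of_le_of_ne (huv ▸ le_sup_right) hne.2
      exact htm.2 (huv ▸ sup_le (hbelow u hu) (hbelow v hv))
  have hls : lowerStar t ≤ d := by
    apply Finset.sup_le
    intro y hy
    simp only [Finset.mem_filter] at hy
    exact hbelow y hy.2
  obtain ⟨k, ⟨hk1, hk2⟩, hkmax⟩ := hkappa t hirr
  have hdb : d ≤ b := inf_le_right
  have hdc : d ≤ c := habc ▸ inf_le_right
  have hta : t ≤ a := le_trans htm.1 inf_le_left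
  have hbk : b ≤ k := hkmax ⟨le_trans hls hdb, fun htb => htm.2 (le_inf hta htb)⟩
  have hck : c ≤ k := hkmax ⟨le_trans hls hdc, fun htc => htm.2 (habc ▸ le_inf hta htc)⟩
  exact hk2 (le_trans (le_trans htm.1 inf_le_right) (sup_le hbk hck))
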